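/- Let ε, δ be real parameters and let 𝒫₁ and 𝒫₂ be the polynomial functions of (q₁,q₂,p₁,p₂) ∈ ℝ⁴ defined by 𝒫₁ = (δ²ε²/8)·[x₁(3y₀+3y₁−y₂) + x₂(3y₀+3y₂−y₁) + x₃(3y₁+3y₂−y₀)] + (δε/2)·[x₁x₂y₀(y₂−y₁) + x₁x₃y₁(y₀−y₂) + x₂x₃y₂(y₁−y₀)] + x₁x₂x₃y₀y₁y₂ and 𝒫₂ = δε·[x₁(y₀−y₁) + x₂(y₂−y₀) + x₃(y₁−y₂)] + x₁x₂y₀(y₁+y₂) + x₁x₃y₁(y₀+y₂) + x₂x₃y₂(y₀+y₁), where x₁ = ε−p₁, x₂ = ε+p₂, x₃ = ε+p₁−p₂, y₀ = ε+q₁+q₂, y₁ = ε−q₁, y₂ = ε−q₂. Then 𝒫₁ and 𝒫₂ are in involution with respect to the canonical Poisson bracket: {𝒫₁, 𝒫₂} = 0 identically on ℝ⁴. -/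
import Mathlib


noncomputable section

/-- The first invariant `𝒫₁` of the two-degrees-of-freedom KdV map. -/
def kdv2P1 (ε δ q1 q2 p1 p2 : ℝ) : ℝ :=
  let x1 := ε - p1; let x2 := ε + p2; let x3 := ε + p1 - p2
  let y0 := ε + q1 + q2; let y1 := ε - q1; let y2 := ε - q2
  δ ^ 2 * ε ^ 2 / 8 *
      (x1 * (3 * y0 + 3 * y1 - y2) + x2 * (3 * y0 + 3 * y2 - y1) +
        x3 * (3 * y1 + 3 * y2 - y0)) +
    δ * ε / 2 *
      (x1 * x2 * y0 * (y2 - y1) + x1 * x3 * y1 * (y0 - y2) + x2 * x3 * y2 * (y1 - y0)) +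
    x1 * x2 * x3 * y0 * y1 * y2

/-- The second invariant `𝒫₂` of the two-degrees-of-freedom KdV map. -/
def kdv2P2 (ε δ q1 q2 p1 p2 : ℝ) : ℝ :=
  let x1 := ε - p1; let x2 := ε + p2; let x3 := ε + p1 - p2
  let y0 := ε + q1 + q2; let y1 := ε - q1; let y2 := ε - q2
  δ * ε * (x1 * (y0 - y1) + x2 * (y2 - y0) + x3 * (y1 - y2)) +
    x1 * x2 * y0 * (y1 + y2) + x1 * x3 * y1 * (y0 + y2) + x2 * x3 * y2 * (y0 + y1)

/-- The canonical Poisson bracket on `ℝ⁴` with coordinates `(q₁,q₂,p₁,p₂)`: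
`{F,G} = Σⱼ (∂F/∂qⱼ ∂G/∂pⱼ − ∂F/∂pⱼ ∂G/∂qⱼ)`, with partial derivatives expressed
as derivatives of one-variable slices. -/
def poissonBracket4 (F G : ℝ → ℝ → ℝ → ℝ → ℝ) (q1 q2 p1 p2 : ℝ) : ℝ :=
  deriv (fun s => F s q2 p1 p2) q1 * deriv (fun s => G q1 q2 s p2) p1 +
    deriv (fun s => F q1 s p1 p2) q2 * deriv (fun s => G q1 q2 p1 s) p2 -
    deriv (fun s => F q1 q2 s p2) p1 * deriv (fun s => G s q2 p1 p2) q1 -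
    deriv (fun s => F q1 q2 p1 s) p2 * deriv (fun s => G q1 s p1 p2) q2

private lemma cubic_deriv (a b c d x : ℝ) :
    deriv (fun s : ℝ => a*s^3 + b*s^2 + c*s + d) x = 3*a*x^2 + 2*b*x + c := by
  have h : HasDerivAt (fun s : ℝ => a*s^3 + b*s^2 + c*s + d)
      (a*((3:ℕ)*x^(3-1)) + b*((2:ℕ)*x^(2-1)) + c*1) x :=
    ((((hasDerivAt_pow 3 x).const_mul a).add
      ((hasDerivAt_pow 2 x).const_mul b)).add
      ((hasDerivAt_id x).const_mul c)).add_const d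
  rw [h.deriv]; push_cast; ring

set_option maxHeartbeats 4000000 in
/-- The two invariants `𝒫₁`, `𝒫₂` of the two-degrees-of-freedom KdV map are in
involution with respect to the canonical Poisson bracket: `{𝒫₁,𝒫₂} = 0` on all of `ℝ⁴`. -/
theorem kdv2_invariants_in_involution (ε δ : ℝ) :
    ∀ q1 q2 p1 p2 : ℝ,
      poissonBracket4 (fun q1 q2 p1 p2 => kdv2P1 ε δ q1 q2 p1 p2)
        (fun q1 q2 p1 p2 => kdv2P2 ε δ q1 q2 p1 p2) q1 q2 p1 p2 = 0 := by
  intro q1 q2 p1 p2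
  have hP1q1 : deriv (fun s : ℝ => kdv2P1 ε δ s q2 p1 p2) q1
      = 3*(0:ℝ)*q1^2 + 2*(q2*p1*p2^2 + (-1:ℝ)*q2*p1^2*p2 + (-1:ℝ)*ε*p1*p2^2 + ε*p1^2*p2 + (-1:ℝ)*ε*q2*p2^2 + ε*q2*p1*p2 + (-1:ℝ)*ε*q2*p1^2 + (-1:ℝ)*ε*δ*p1*p2 + (1/2:ℝ)*ε*δ*p1^2 + ε^2*p2^2 + (-1:ℝ)*ε^2*p1*p2 + ε^2*p1^2 + ε^2*δ*p2 + (-1/2:ℝ)*ε^2*δ*p1 + ε^3*q2 + (-1:ℝ)*ε^4)*q1 + (q2^2*p1*p2^2 + (-1:ℝ)*q2^2*p1^2*p2 + (-1:ℝ)*ε*q2*p1*p2^2 + ε*q2*p1^2*p2 + (-1:ℝ)*ε*q2^2*p2^2 + ε*q2^2*p1*p2 + (-1:ℝ)*ε*q2^2*p1^2 + (-1:ℝ)*ε*δ*q2*p2^2 + ε*δ*q2*p1^2 + ε^2*q2*p2^2 + (-1:ℝ)*ε^2*q2*p1*p2 + ε^2*q2*p1^2 + ε^2*δ*p2^2 +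 (-1:ℝ)*ε^2*δ*p1*p2 + (-1/2:ℝ)*ε^2*δ*p1^2 + ε^2*δ*q2*p2 + ε^2*δ*q2*p1 + ε^2*δ^2*p2 + (-1/2:ℝ)*ε^2*δ^2*p1 + ε^3*q2^2 + (-3/2:ℝ)*ε^3*δ*p1 + (-1:ℝ)*ε^4*q2) := by
    rw [show (fun s : ℝ => kdv2P1 ε δ s q2 p1 p2)
        = fun s : ℝ => (0:ℝ)*s^3 + (q2*p1*p2^2 + (-1:ℝ)*q2*p1^2*p2 + (-1:ℝ)*ε*p1*p2^2 + ε*p1^2*p2 + (-1:ℝ)*ε*q2*p2^2 + ε*q2*p1*p2 + (-1:ℝ)*ε*q2*p1^2 + (-1:ℝ)*ε*δ*p1*p2 + (1/2:ℝ)*ε*δ*p1^2 + ε^2*p2^2 + (-1:ℝ)*ε^2*p1*p2 + ε^2*p1^2 + ε^2*δ*p2 + (-1/2:ℝ)*ε^2*δ*p1 + ε^3*q2 + (-1:ℝ)*ε^4)*s^2 + (q2^2*p1*p2^2 + (-1:ℝ)*q2^2*p1^2*p2 + (-1:ℝ)*ε*q2*p1*p2^2 + ε*q2*p1^2*p2 +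 (-1:ℝ)*ε*q2^2*p2^2 + ε*q2^2*p1*p2 + (-1:ℝ)*ε*q2^2*p1^2 + (-1:ℝ)*ε*δ*q2*p2^2 + ε*δ*q2*p1^2 + ε^2*q2*p2^2 + (-1:ℝ)*ε^2*q2*p1*p2 + ε^2*q2*p1^2 + ε^2*δ*p2^2 + (-1:ℝ)*ε^2*δ*p1*p2 + (-1/2:ℝ)*ε^2*δ*p1^2 + ε^2*δ*q2*p2 + ε^2*δ*q2*p1 + ε^2*δ^2*p2 + (-1/2:ℝ)*ε^2*δ^2*p1 + ε^3*q2^2 + (-3/2:ℝ)*ε^3*δ*p1 + (-1:ℝ)*ε^4*q2)*s + ((-1:ℝ)*ε*q2^2*p1*p2^2 + ε*q2^2*p1^2*p2 + (-1/2:ℝ)*ε*δ*q2^2*p2^2 + ε*δ*q2^2*p1*p2 + ε^2*q2^2*p2^2 + (-1:ℝ)*ε^2*q2^2*p1*p2 + ε^2*q2^2*p1^2 + (1/2:ℝ)*ε^2*δ*q2*p2^2 + ε^2*δ*q2*p1*p2 + (-1:ℝ)*ε^2*δ*q2*p1^2 + (-1/2:ℝ)*ε^2*δ*q2^2*p2 +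 ε^2*δ*q2^2*p1 + (1/2:ℝ)*ε^2*δ^2*q2*p2 + (-1:ℝ)*ε^2*δ^2*q2*p1 + ε^3*p1*p2^2 + (-1:ℝ)*ε^3*p1^2*p2 + (-3/2:ℝ)*ε^3*δ*q2*p2 + (-1:ℝ)*ε^4*p2^2 + ε^4*p1*p2 + (-1:ℝ)*ε^4*p1^2 + (-1:ℝ)*ε^4*q2^2 + (15/8:ℝ)*ε^4*δ^2 + ε^6) from
      funext fun s => by simp only [kdv2P1]; ring]
    exact cubic_deriv _ _ _ _ _
  have hP1q2 : deriv (fun s : ℝ => kdv2P1 ε δ q1 s p1 p2) q2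
      = 3*(0:ℝ)*q2^2 + 2*(q1*p1*p2^2 + (-1:ℝ)*q1*p1^2*p2 + (-1:ℝ)*ε*p1*p2^2 + ε*p1^2*p2 + (-1:ℝ)*ε*q1*p2^2 + ε*q1*p1*p2 + (-1:ℝ)*ε*q1*p1^2 + (-1/2:ℝ)*ε*δ*p2^2 + ε*δ*p1*p2 + ε^2*p2^2 + (-1:ℝ)*ε^2*p1*p2 + ε^2*p1^2 + (-1/2:ℝ)*ε^2*δ*p2 + ε^2*δ*p1 + ε^3*q1 + (-1:ℝ)*ε^4)*q2 + (q1^2*p1*p2^2 + (-1:ℝ)*q1^2*p1^2*p2 + (-1:ℝ)*ε*q1*p1*p2^2 + ε*q1*p1^2*p2 + (-1:ℝ)*ε*q1^2*p2^2 + ε*q1^2*p1*p2 + (-1:ℝ)*ε*q1^2*p1^2 + (-1:ℝ)*ε*δ*q1*p2^2 + ε*δ*q1*p1^2 + ε^2*q1*p2^2 + (-1:ℝ)*ε^2*q1*p1*p2 + ε^2*q1*p1^2 + (1/2:ℝ)*ε^2*δ*p2^2 + ε^2*δ*p1*p2 + (-1:ℝ)*ε^2*δ*p1^2 + ε^2*δ*q1*p2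 + ε^2*δ*q1*p1 + (1/2:ℝ)*ε^2*δ^2*p2 + (-1:ℝ)*ε^2*δ^2*p1 + ε^3*q1^2 + (-3/2:ℝ)*ε^3*δ*p2 + (-1:ℝ)*ε^4*q1) := by
    rw [show (fun s : ℝ => kdv2P1 ε δ q1 s p1 p2)
        = fun s : ℝ => (0:ℝ)*s^3 + (q1*p1*p2^2 + (-1:ℝ)*q1*p1^2*p2 + (-1:ℝ)*ε*p1*p2^2 + ε*p1^2*p2 + (-1:ℝ)*ε*q1*p2^2 + ε*q1*p1*p2 + (-1:ℝ)*ε*q1*p1^2 + (-1/2:ℝ)*ε*δ*p2^2 + ε*δ*p1*p2 + ε^2*p2^2 + (-1:ℝ)*ε^2*p1*p2 + ε^2*p1^2 + (-1/2:ℝ)*ε^2*δ*p2 + ε^2*δ*p1 + ε^3*q1 + (-1:ℝ)*ε^4)*s^2 + (q1^2*p1*p2^2 + (-1:ℝ)*q1^2*p1^2*p2 + (-1:ℝ)*ε*q1*p1*p2^2 + ε*q1*p1^2*p2 + (-1:ℝ)*ε*q1^2*p2^2 + ε*q1^2*p1*p2 + (-1:ℝ)*ε*q1^2*p1^2 + (-1:ℝ)*ε*δ*q1*p2^2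 + ε*δ*q1*p1^2 + ε^2*q1*p2^2 + (-1:ℝ)*ε^2*q1*p1*p2 + ε^2*q1*p1^2 + (1/2:ℝ)*ε^2*δ*p2^2 + ε^2*δ*p1*p2 + (-1:ℝ)*ε^2*δ*p1^2 + ε^2*δ*q1*p2 + ε^2*δ*q1*p1 + (1/2:ℝ)*ε^2*δ^2*p2 + (-1:ℝ)*ε^2*δ^2*p1 + ε^3*q1^2 + (-3/2:ℝ)*ε^3*δ*p2 + (-1:ℝ)*ε^4*q1)*s + ((-1:ℝ)*ε*q1^2*p1*p2^2 + ε*q1^2*p1^2*p2 + (-1:ℝ)*ε*δ*q1^2*p1*p2 + (1/2:ℝ)*ε*δ*q1^2*p1^2 + ε^2*q1^2*p2^2 + (-1:ℝ)*ε^2*q1^2*p1*p2 + ε^2*q1^2*p1^2 + ε^2*δ*q1*p2^2 + (-1:ℝ)*ε^2*δ*q1*p1*p2 + (-1/2:ℝ)*ε^2*δ*q1*p1^2 + ε^2*δ*q1^2*p2 + (-1/2:ℝ)*ε^2*δ*q1^2*p1 + ε^2*δ^2*q1*p2 + (-1/2:ℝ)*ε^2*δ^2*q1*p1 + ε^3*p1*p2^2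 + (-1:ℝ)*ε^3*p1^2*p2 + (-3/2:ℝ)*ε^3*δ*q1*p1 + (-1:ℝ)*ε^4*p2^2 + ε^4*p1*p2 + (-1:ℝ)*ε^4*p1^2 + (-1:ℝ)*ε^4*q1^2 + (15/8:ℝ)*ε^4*δ^2 + ε^6) from
      funext fun s => by simp only [kdv2P1]; ring]
    exact cubic_deriv _ _ _ _ _
  have hP1p1 : deriv (fun s : ℝ => kdv2P1 ε δ q1 q2 s p2) p1
      = 3*(0:ℝ)*p1^2 + 2*((-1:ℝ)*q1*q2^2*p2 + (-1:ℝ)*q1^2*q2*p2 + ε*q2^2*p2 + ε*q1*q2*p2 + (-1:ℝ)*ε*q1*q2^2 + ε*q1^2*p2 + (-1:ℝ)*ε*q1^2*q2 + ε*δ*q1*q2 + (1/2:ℝ)*ε*δ*q1^2 + ε^2*q2^2 + ε^2*q1*q2 + ε^2*q1^2 + (-1:ℝ)*ε^2*δ*q2 + (-1/2:ℝ)*ε^2*δ*q1 + (-1:ℝ)*ε^3*p2 + (-1:ℝ)*ε^4)*p1 + (q1*q2^2*p2^2 + q1^2*q2*p2^2 + (-1:ℝ)*ε*q2^2*p2^2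 + (-1:ℝ)*ε*q1*q2*p2^2 + ε*q1*q2^2*p2 + (-1:ℝ)*ε*q1^2*p2^2 + ε*q1^2*q2*p2 + ε*δ*q2^2*p2 + (-1:ℝ)*ε*δ*q1^2*p2 + (-1:ℝ)*ε^2*q2^2*p2 + (-1:ℝ)*ε^2*q1*q2*p2 + (-1:ℝ)*ε^2*q1^2*p2 + ε^2*δ*q2*p2 + ε^2*δ*q2^2 + (-1:ℝ)*ε^2*δ*q1*p2 + ε^2*δ*q1*q2 + (-1/2:ℝ)*ε^2*δ*q1^2 + (-1:ℝ)*ε^2*δ^2*q2 + (-1/2:ℝ)*ε^2*δ^2*q1 + ε^3*p2^2 + (-3/2:ℝ)*ε^3*δ*q1 + ε^4*p2) := by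
    rw [show (fun s : ℝ => kdv2P1 ε δ q1 q2 s p2)
        = fun s : ℝ => (0:ℝ)*s^3 + ((-1:ℝ)*q1*q2^2*p2 + (-1:ℝ)*q1^2*q2*p2 + ε*q2^2*p2 + ε*q1*q2*p2 + (-1:ℝ)*ε*q1*q2^2 + ε*q1^2*p2 + (-1:ℝ)*ε*q1^2*q2 + ε*δ*q1*q2 + (1/2:ℝ)*ε*δ*q1^2 + ε^2*q2^2 + ε^2*q1*q2 + ε^2*q1^2 + (-1:ℝ)*ε^2*δ*q2 + (-1/2:ℝ)*ε^2*δ*q1 + (-1:ℝ)*ε^3*p2 + (-1:ℝ)*ε^4)*s^2 + (q1*q2^2*p2^2 + q1^2*q2*p2^2 + (-1:ℝ)*ε*q2^2*p2^2 + (-1:ℝ)*ε*q1*q2*p2^2 + ε*q1*q2^2*p2 + (-1:ℝ)*ε*q1^2*p2^2 + ε*q1^2*q2*p2 + ε*δ*q2^2*p2 + (-1:ℝ)*ε*δ*q1^2*p2 + (-1:ℝ)*ε^2*q2^2*p2 + (-1:ℝ)*ε^2*q1*q2*p2 + (-1:ℝ)*ε^2*q1^2*p2 + ε^2*δ*q2*p2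 + ε^2*δ*q2^2 + (-1:ℝ)*ε^2*δ*q1*p2 + ε^2*δ*q1*q2 + (-1/2:ℝ)*ε^2*δ*q1^2 + (-1:ℝ)*ε^2*δ^2*q2 + (-1/2:ℝ)*ε^2*δ^2*q1 + ε^3*p2^2 + (-3/2:ℝ)*ε^3*δ*q1 + ε^4*p2)*s + ((-1:ℝ)*ε*q1*q2^2*p2^2 + (-1:ℝ)*ε*q1^2*q2*p2^2 + (-1/2:ℝ)*ε*δ*q2^2*p2^2 + (-1:ℝ)*ε*δ*q1*q2*p2^2 + ε^2*q2^2*p2^2 + ε^2*q1*q2*p2^2 + ε^2*q1^2*p2^2 + (1/2:ℝ)*ε^2*δ*q2*p2^2 + (-1/2:ℝ)*ε^2*δ*q2^2*p2 + ε^2*δ*q1*p2^2 + ε^2*δ*q1*q2*p2 + ε^2*δ*q1^2*p2 + (1/2:ℝ)*ε^2*δ^2*q2*p2 + ε^2*δ^2*q1*p2 + ε^3*q1*q2^2 + ε^3*q1^2*q2 + (-3/2:ℝ)*ε^3*δ*q2*p2 + (-1:ℝ)*ε^4*p2^2 + (-1:ℝ)*ε^4*q2^2 + (-1:ℝ)*ε^4*q1*q2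 + (-1:ℝ)*ε^4*q1^2 + (15/8:ℝ)*ε^4*δ^2 + ε^6) from
      funext fun s => by simp only [kdv2P1]; ring]
    exact cubic_deriv _ _ _ _ _
  have hP1p2 : deriv (fun s : ℝ => kdv2P1 ε δ q1 q2 p1 s) p2
      = 3*(0:ℝ)*p2^2 + 2*(q1*q2^2*p1 + q1^2*q2*p1 + (-1:ℝ)*ε*q2^2*p1 + (-1:ℝ)*ε*q1*q2*p1 + (-1:ℝ)*ε*q1*q2^2 + (-1:ℝ)*ε*q1^2*p1 + (-1:ℝ)*ε*q1^2*q2 + (-1/2:ℝ)*ε*δ*q2^2 + (-1:ℝ)*ε*δ*q1*q2 + ε^2*q2^2 + ε^2*q1*q2 + ε^2*q1^2 + (1/2:ℝ)*ε^2*δ*q2 + ε^2*δ*q1 + ε^3*p1 + (-1:ℝ)*ε^4)*p2 + ((-1:ℝ)*q1*q2^2*p1^2 + (-1:ℝ)*q1^2*q2*p1^2 + ε*q2^2*p1^2 + ε*q1*q2*p1^2 + ε*q1*q2^2*p1 + ε*q1^2*p1^2 + ε*q1^2*q2*p1 + ε*δ*q2^2*p1 + (-1:ℝ)*ε*δ*q1^2*p1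 + (-1:ℝ)*ε^2*q2^2*p1 + (-1:ℝ)*ε^2*q1*q2*p1 + (-1:ℝ)*ε^2*q1^2*p1 + ε^2*δ*q2*p1 + (-1/2:ℝ)*ε^2*δ*q2^2 + (-1:ℝ)*ε^2*δ*q1*p1 + ε^2*δ*q1*q2 + ε^2*δ*q1^2 + (1/2:ℝ)*ε^2*δ^2*q2 + ε^2*δ^2*q1 + (-1:ℝ)*ε^3*p1^2 + (-3/2:ℝ)*ε^3*δ*q2 + ε^4*p1) := by
    rw [show (fun s : ℝ => kdv2P1 ε δ q1 q2 p1 s)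
        = fun s : ℝ => (0:ℝ)*s^3 + (q1*q2^2*p1 + q1^2*q2*p1 + (-1:ℝ)*ε*q2^2*p1 + (-1:ℝ)*ε*q1*q2*p1 + (-1:ℝ)*ε*q1*q2^2 + (-1:ℝ)*ε*q1^2*p1 + (-1:ℝ)*ε*q1^2*q2 + (-1/2:ℝ)*ε*δ*q2^2 + (-1:ℝ)*ε*δ*q1*q2 + ε^2*q2^2 + ε^2*q1*q2 + ε^2*q1^2 + (1/2:ℝ)*ε^2*δ*q2 + ε^2*δ*q1 + ε^3*p1 + (-1:ℝ)*ε^4)*s^2 + ((-1:ℝ)*q1*q2^2*p1^2 + (-1:ℝ)*q1^2*q2*p1^2 + ε*q2^2*p1^2 + ε*q1*q2*p1^2 + ε*q1*q2^2*p1 + ε*q1^2*p1^2 + ε*q1^2*q2*p1 + ε*δ*q2^2*p1 + (-1:ℝ)*ε*δ*q1^2*p1 + (-1:ℝ)*ε^2*q2^2*p1 + (-1:ℝ)*ε^2*q1*q2*p1 + (-1:ℝ)*ε^2*q1^2*p1 + ε^2*δ*q2*p1 + (-1/2:ℝ)*ε^2*δ*q2^2 + (-1:ℝ)*ε^2*δ*q1*p1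 + ε^2*δ*q1*q2 + ε^2*δ*q1^2 + (1/2:ℝ)*ε^2*δ^2*q2 + ε^2*δ^2*q1 + (-1:ℝ)*ε^3*p1^2 + (-3/2:ℝ)*ε^3*δ*q2 + ε^4*p1)*s + ((-1:ℝ)*ε*q1*q2^2*p1^2 + (-1:ℝ)*ε*q1^2*q2*p1^2 + ε*δ*q1*q2*p1^2 + (1/2:ℝ)*ε*δ*q1^2*p1^2 + ε^2*q2^2*p1^2 + ε^2*q1*q2*p1^2 + ε^2*q1^2*p1^2 + (-1:ℝ)*ε^2*δ*q2*p1^2 + ε^2*δ*q2^2*p1 + (-1/2:ℝ)*ε^2*δ*q1*p1^2 + ε^2*δ*q1*q2*p1 + (-1/2:ℝ)*ε^2*δ*q1^2*p1 + (-1:ℝ)*ε^2*δ^2*q2*p1 + (-1/2:ℝ)*ε^2*δ^2*q1*p1 + ε^3*q1*q2^2 + ε^3*q1^2*q2 + (-3/2:ℝ)*ε^3*δ*q1*p1 + (-1:ℝ)*ε^4*p1^2 + (-1:ℝ)*ε^4*q2^2 + (-1:ℝ)*ε^4*q1*q2 + (-1:ℝ)*ε^4*q1^2 + (15/8:ℝ)*ε^4*δ^2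 + ε^6) from
      funext fun s => by simp only [kdv2P1]; ring]
    exact cubic_deriv _ _ _ _ _
  have hP2q1 : deriv (fun s : ℝ => kdv2P2 ε δ s q2 p1 p2) q1
      = 3*(0:ℝ)*q1^2 + 2*(p1^2 + ε*p1 + (-2:ℝ)*ε^2)*q1 + ((2:ℝ)*q2*p1*p2 + (-2:ℝ)*ε*p1*p2 + ε*p1^2 + (-2:ℝ)*ε*q2*p2 + (2:ℝ)*ε*q2*p1 + (-3:ℝ)*ε*δ*p1 + (2:ℝ)*ε^2*p2 + (-1:ℝ)*ε^2*p1 + (-2:ℝ)*ε^2*q2) := by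
    rw [show (fun s : ℝ => kdv2P2 ε δ s q2 p1 p2)
        = fun s : ℝ => (0:ℝ)*s^3 + (p1^2 + ε*p1 + (-2:ℝ)*ε^2)*s^2 + ((2:ℝ)*q2*p1*p2 + (-2:ℝ)*ε*p1*p2 + ε*p1^2 + (-2:ℝ)*ε*q2*p2 + (2:ℝ)*ε*q2*p1 + (-3:ℝ)*ε*δ*p1 + (2:ℝ)*ε^2*p2 + (-1:ℝ)*ε^2*p1 + (-2:ℝ)*ε^2*q2)*s + (q2^2*p2^2 + ε*q2*p2^2 + (-2:ℝ)*ε*q2*p1*p2 + (-1:ℝ)*ε*q2^2*p2 + (-3:ℝ)*ε*δ*q2*p2 + (-2:ℝ)*ε^2*p2^2 + (2:ℝ)*ε^2*p1*p2 + (-2:ℝ)*ε^2*p1^2 + ε^2*q2*p2 + (-2:ℝ)*ε^2*q2*p1 + (-2:ℝ)*ε^2*q2^2 + (6:ℝ)*ε^4) from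
      funext fun s => by simp only [kdv2P2]; ring]
    exact cubic_deriv _ _ _ _ _
  have hP2q2 : deriv (fun s : ℝ => kdv2P2 ε δ q1 s p1 p2) q2
      = 3*(0:ℝ)*q2^2 + 2*(p2^2 + (-1:ℝ)*ε*p2 + (-2:ℝ)*ε^2)*q2 + ((2:ℝ)*q1*p1*p2 + ε*p2^2 + (-2:ℝ)*ε*p1*p2 + (-2:ℝ)*ε*q1*p2 + (2:ℝ)*ε*q1*p1 + (-3:ℝ)*ε*δ*p2 + ε^2*p2 + (-2:ℝ)*ε^2*p1 + (-2:ℝ)*ε^2*q1) := by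
    rw [show (fun s : ℝ => kdv2P2 ε δ q1 s p1 p2)
        = fun s : ℝ => (0:ℝ)*s^3 + (p2^2 + (-1:ℝ)*ε*p2 + (-2:ℝ)*ε^2)*s^2 + ((2:ℝ)*q1*p1*p2 + ε*p2^2 + (-2:ℝ)*ε*p1*p2 + (-2:ℝ)*ε*q1*p2 + (2:ℝ)*ε*q1*p1 + (-3:ℝ)*ε*δ*p2 + ε^2*p2 + (-2:ℝ)*ε^2*p1 + (-2:ℝ)*ε^2*q1)*s + (q1^2*p1^2 + (-2:ℝ)*ε*q1*p1*p2 + ε*q1*p1^2 + ε*q1^2*p1 + (-3:ℝ)*ε*δ*q1*p1 + (-2:ℝ)*ε^2*p2^2 + (2:ℝ)*ε^2*p1*p2 + (-2:ℝ)*ε^2*p1^2 + (2:ℝ)*ε^2*q1*p2 + (-1:ℝ)*ε^2*q1*p1 + (-2:ℝ)*ε^2*q1^2 + (6:ℝ)*ε^4) from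
      funext fun s => by simp only [kdv2P2]; ring]
    exact cubic_deriv _ _ _ _ _
  have hP2p1 : deriv (fun s : ℝ => kdv2P2 ε δ q1 q2 s p2) p1
      = 3*(0:ℝ)*p1^2 + 2*(q1^2 + ε*q1 + (-2:ℝ)*ε^2)*p1 + ((2:ℝ)*q1*q2*p2 + (-2:ℝ)*ε*q2*p2 + (-2:ℝ)*ε*q1*p2 + (2:ℝ)*ε*q1*q2 + ε*q1^2 + (-3:ℝ)*ε*δ*q1 + (2:ℝ)*ε^2*p2 + (-2:ℝ)*ε^2*q2 + (-1:ℝ)*ε^2*q1) := by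
    rw [show (fun s : ℝ => kdv2P2 ε δ q1 q2 s p2)
        = fun s : ℝ => (0:ℝ)*s^3 + (q1^2 + ε*q1 + (-2:ℝ)*ε^2)*s^2 + ((2:ℝ)*q1*q2*p2 + (-2:ℝ)*ε*q2*p2 + (-2:ℝ)*ε*q1*p2 + (2:ℝ)*ε*q1*q2 + ε*q1^2 + (-3:ℝ)*ε*δ*q1 + (2:ℝ)*ε^2*p2 + (-2:ℝ)*ε^2*q2 + (-1:ℝ)*ε^2*q1)*s + (q2^2*p2^2 + ε*q2*p2^2 + (-1:ℝ)*ε*q2^2*p2 + (-2:ℝ)*ε*q1*q2*p2 + (-3:ℝ)*ε*δ*q2*p2 + (-2:ℝ)*ε^2*p2^2 + ε^2*q2*p2 + (-2:ℝ)*ε^2*q2^2 + (2:ℝ)*ε^2*q1*p2 + (-2:ℝ)*ε^2*q1*q2 + (-2:ℝ)*ε^2*q1^2 + (6:ℝ)*ε^4) from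
      funext fun s => by simp only [kdv2P2]; ring]
    exact cubic_deriv _ _ _ _ _
  have hP2p2 : deriv (fun s : ℝ => kdv2P2 ε δ q1 q2 p1 s) p2
      = 3*(0:ℝ)*p2^2 + 2*(q2^2 + ε*q2 + (-2:ℝ)*ε^2)*p2 + ((2:ℝ)*q1*q2*p1 + (-2:ℝ)*ε*q2*p1 + (-1:ℝ)*ε*q2^2 + (-2:ℝ)*ε*q1*p1 + (-2:ℝ)*ε*q1*q2 + (-3:ℝ)*ε*δ*q2 + (2:ℝ)*ε^2*p1 + ε^2*q2 + (2:ℝ)*ε^2*q1) := by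
    rw [show (fun s : ℝ => kdv2P2 ε δ q1 q2 p1 s)
        = fun s : ℝ => (0:ℝ)*s^3 + (q2^2 + ε*q2 + (-2:ℝ)*ε^2)*s^2 + ((2:ℝ)*q1*q2*p1 + (-2:ℝ)*ε*q2*p1 + (-1:ℝ)*ε*q2^2 + (-2:ℝ)*ε*q1*p1 + (-2:ℝ)*ε*q1*q2 + (-3:ℝ)*ε*δ*q2 + (2:ℝ)*ε^2*p1 + ε^2*q2 + (2:ℝ)*ε^2*q1)*s + (q1^2*p1^2 + ε*q1*p1^2 + (2:ℝ)*ε*q1*q2*p1 + ε*q1^2*p1 + (-3:ℝ)*ε*δ*q1*p1 + (-2:ℝ)*ε^2*p1^2 + (-2:ℝ)*ε^2*q2*p1 + (-2:ℝ)*ε^2*q2^2 + (-1:ℝ)*ε^2*q1*p1 + (-2:ℝ)*ε^2*q1*q2 + (-2:ℝ)*ε^2*q1^2 + (6:ℝ)*ε^4) from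
      funext fun s => by simp only [kdv2P2]; ring]
    exact cubic_deriv _ _ _ _ _
  simp only [poissonBracket4]
  rw [hP1q1, hP1q2, hP1p1, hP1p2, hP2q1, hP2q2, hP2p1, hP2p2]
  ring
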